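/- Let V be a vector space with subspaces C' ⊆ C ⊆ C'' such that dim(C''/C') = c, and let V = V₁ ⊕ ⋯ ⊕ V_{c+1} be a direct sum decomposition such that C' = ⊕ⱼ (C' ∩ Vⱼ) and C'' = ⊕ⱼ (C'' ∩ Vⱼ). Then there exists an index k such that C = (C ∩ V_k) ⊕ (C ∩ Ṽ_k), where Ṽ_k = ⊕_{j≠k} Vⱼ. -/
import Mathlib


open Module

lemma finrank_finset_sup_of_indep {K V : Type*} [Field K] [AddCommGroup V] [Module K V]
    [FiniteDimensional K V] {ι : Type*} [DecidableEq ι] (f : ι → Submodule K V)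
    (h : iSupIndep f) (s : Finset ι) :
    finrank K ↥(s.sup f) = ∑ i ∈ s, finrank K ↥(f i) := by
  induction s using Finset.induction_on with
  | empty => simp
  | @insert a s ha ih =>
    rw [Finset.sup_insert, Finset.sum_insert ha, ← ih]
    have hdisj : Disjoint (f a) (s.sup f) := by
      refine (h a).mono_right ?_
      refine Finset.sup_le fun j hj => ?_
      exact le_iSup₂ (f := fun j (_ : j ≠ a) => f j) j (by rintro rfl; exact ha hj)
    have := Submodule.finrank_sup_add_finrank_inf_eq (f a) (s.sup f)
    rw [hdisj.eq_bot] at this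
    simpa using this

theorem stmt_9 {K V : Type*} [Field K] [AddCommGroup V] [Module K V]
    [FiniteDimensional K V] (c : ℕ)
    (C' C C'' : Submodule K V) (h1 : C' ≤ C) (h2 : C ≤ C'')
    (hdim : finrank K C'' = finrank K C' + c)
    (Vj : Fin (c + 1) → Submodule K V)
    (hindep : iSupIndep Vj) (hsup : ⨆ j, Vj j = ⊤)
    (hC' : C' = ⨆ j, C' ⊓ Vj j) (hC'' : C'' = ⨆ j, C'' ⊓ Vj j) :
    ∃ k : Fin (c + 1),
      C = (C ⊓ Vj k) ⊔ (C ⊓ ⨆ (j) (_ : j ≠ k), Vj j) := by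
  classical
  have hind' : iSupIndep (fun j => C' ⊓ Vj j) := hindep.mono fun j => inf_le_right
  have hind'' : iSupIndep (fun j => C'' ⊓ Vj j) := hindep.mono fun j => inf_le_right
  have hsum' : finrank K C' = ∑ j, finrank K ↥(C' ⊓ Vj j) := by
    conv_lhs => rw [hC']
    rw [← Finset.sup_univ_eq_iSup]
    exact finrank_finset_sup_of_indep _ hind' _
  have hsum'' : finrank K C'' = ∑ j, finrank K ↥(C'' ⊓ Vj j) := by
    conv_lhs => rw [hC'']
    rw [← Finset.sup_univ_eq_iSup]
    exact finrank_finset_sup_of_indep _ hind'' _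
  have hle : ∀ j, C' ⊓ Vj j ≤ C'' ⊓ Vj j :=
    fun j => inf_le_inf_right _ (h1.trans h2)
  -- pigeonhole: some k has equal finranks
  have hk : ∃ k, finrank K ↥(C'' ⊓ Vj k) ≤ finrank K ↥(C' ⊓ Vj k) := by
    by_contra hcon
    push_neg at hcon
    have : ∑ j : Fin (c+1), (finrank K ↥(C' ⊓ Vj j) + 1) ≤
        ∑ j : Fin (c+1), finrank K ↥(C'' ⊓ Vj j) :=
      Finset.sum_le_sum fun j _ => hcon j
    rw [Finset.sum_add_distrib, ← hsum', ← hsum'', hdim, Finset.sum_const,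
      Finset.card_univ, Fintype.card_fin, smul_eq_mul, mul_one] at this
    omega
  obtain ⟨k, hk⟩ := hk
  have heq : C'' ⊓ Vj k = C' ⊓ Vj k :=
    (Submodule.eq_of_le_of_finrank_le (hle k) hk).symm
  refine ⟨k, le_antisymm ?_ (sup_le inf_le_left inf_le_left)⟩
  intro x hx
  have hx'' : x ∈ (C'' ⊓ Vj k) ⊔ ⨆ (j) (_ : j ≠ k), (C'' ⊓ Vj j) := by
    have hsplit : (⨆ j, C'' ⊓ Vj j) =
        (C'' ⊓ Vj k) ⊔ ⨆ (j) (_ : j ≠ k), (C'' ⊓ Vj j) := by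
      apply le_antisymm
      · refine iSup_le fun j => ?_
        by_cases hj : j = k
        · subst hj; exact le_sup_left
        · exact (le_iSup₂ (f := fun j (_ : j ≠ k) => C'' ⊓ Vj j) j hj).trans le_sup_right
      · exact sup_le (le_iSup (fun j => C'' ⊓ Vj j) k) (iSup₂_le fun j _ => le_iSup (fun j => C'' ⊓ Vj j) j)
    rw [← hsplit, ← hC'']
    exact h2 hx
  obtain ⟨y, hy, z, hz, hyz⟩ := Submodule.mem_sup.mp hx''
  rw [heq] at hy
  have hyC : y ∈ C ⊓ Vj k := ⟨h1 hy.1, hy.2⟩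
  have hzC : z ∈ C := by
    have : z = x - y := by rw [← hyz]; abel
    rw [this]
    exact Submodule.sub_mem _ hx (h1 hy.1)
  have hzV : z ∈ ⨆ (j) (_ : j ≠ k), Vj j :=
    (iSup₂_mono (f := fun j (_ : j ≠ k) => C'' ⊓ Vj j) fun j _ => inf_le_right) hz
  exact hyz ▸ Submodule.add_mem_sup hyC ⟨hzC, hzV⟩
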